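/- arXiv:2406.19854 — 2 statements merged into one kernel-verified Lean document; each statement's English description precedes it below -/
import Mathlib

section
/- Let X be a q-skeletal symmetric simplicial set. Then X is spiny if and only if 𝓔_T is injective for every spine T of [n] for each 1 ≤ n ≤ q. -/
/-- A symmetric (simplicial) set: a functor `Υᵒᵖ → Set`, where `Υ` has objects
`[n] = {0,…,n}` (encoded as `Fin (n+1)`) and all functions as morphisms.
For `α : [m] → [n]` and `x ∈ X_n`, `act α x` is `x · α ∈ X_m`. -/
structure SymSet where
  obj : ℕ → Type
  act : ∀ {m n : ℕ}, (Fin (m + 1) → Fin (n + 1)) → obj n → obj m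
  act_id : ∀ {n : ℕ} (x : obj n), act id x = x
  act_comp : ∀ {m n k : ℕ} (α : Fin (m + 1) → Fin (n + 1)) (β : Fin (n + 1) → Fin (k + 1))
      (x : obj k), act α (act β x) = act (β ∘ α) x

namespace SymSet

/-- `x_{ij} ∈ X_1`, the action on `x ∈ X_n` of the map `[1] → [n]` with `0 ↦ i`, `1 ↦ j`. -/
def edge (X : SymSet) {n : ℕ} (i j : Fin (n + 1)) (x : X.obj n) : X.obj 1 :=
  X.act (fun t : Fin 2 => if t = 0 then i else j) x

/-- The domain of an edge, its image under `ι₀ : [0] → [1]`, `0 ↦ 0`. -/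
def edgeDom (X : SymSet) (f : X.obj 1) : X.obj 0 :=
  X.act (fun _ : Fin 1 => (0 : Fin 2)) f

/-- The codomain of an edge, its image under `ι₁ : [0] → [1]`, `0 ↦ 1`. -/
def edgeCod (X : SymSet) (f : X.obj 1) : X.obj 0 :=
  X.act (fun _ : Fin 1 => (1 : Fin 2)) f

/-- The identity edge `id_a` on an object `a ∈ X_0`, induced by the unique map `[1] → [0]`. -/
def identityEdge (X : SymSet) (a : X.obj 0) : X.obj 1 :=
  X.act (fun _ : Fin 2 => (0 : Fin 1)) a

/-- An edge is an identity if it is in the image of `X_0 → X_1`. -/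
def IsIdentityEdge (X : SymSet) (f : X.obj 1) : Prop :=
  ∃ a : X.obj 0, f = X.identityEdge a

/-- The tuple of edges `x_{ij}` (for `i < j` an edge `{i,j}` of the spine `T`)
associated to an `n`-simplex `x`. -/
def spineTuple (X : SymSet) {n : ℕ} (T : SimpleGraph (Fin (n + 1))) (x : X.obj n) :
    ∀ i j : Fin (n + 1), i < j → T.Adj i j → X.obj 1 :=
  fun i j _ _ => X.edge i j x

/-- Membership in `lim_T X`: the components have matching endpoints. -/
def IsSpineLim (X : SymSet) {n : ℕ} (T : SimpleGraph (Fin (n + 1)))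
    (e : ∀ i j : Fin (n + 1), i < j → T.Adj i j → X.obj 1) : Prop :=
  ∃ v : Fin (n + 1) → X.obj 0, ∀ (i j : Fin (n + 1)) (hlt : i < j) (h : T.Adj i j),
    X.edgeDom (e i j hlt h) = v i ∧ X.edgeCod (e i j hlt h) = v j

/-- The limit `lim_T X` of the diagram associated to a spine `T`. -/
def SpineLim (X : SymSet) {n : ℕ} (T : SimpleGraph (Fin (n + 1))) : Type :=
  { e : ∀ i j : Fin (n + 1), i < j → T.Adj i j → X.obj 1 // X.IsSpineLim T e }

lemma spineTuple_isSpineLim (X : SymSet) {n : ℕ} (T : SimpleGraph (Fin (n + 1)))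
    (x : X.obj n) : X.IsSpineLim T (X.spineTuple T x) := by
  refine ⟨fun i => X.act (fun _ : Fin 1 => i) x, fun i j hlt h => ⟨?_, ?_⟩⟩
  · show X.act _ (X.act _ x) = _
    rw [X.act_comp]
    show X.act ((fun t : Fin 2 => if t = 0 then i else j) ∘ fun _ : Fin 1 => 0) x
      = X.act (fun _ : Fin 1 => i) x
    congr 1
  · show X.act _ (X.act _ x) = _
    rw [X.act_comp]
    show X.act ((fun t : Fin 2 => if t = 0 then i else j) ∘ fun _ : Fin 1 => 1) x
      = X.act (fun _ : Fin 1 => j) x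
    congr 1

/-- The map `𝓔_T : X_n → lim_T X`. -/
def spineMap (X : SymSet) {n : ℕ} (T : SimpleGraph (Fin (n + 1))) (x : X.obj n) :
    X.SpineLim T :=
  ⟨X.spineTuple T x, X.spineTuple_isSpineLim T x⟩

/-- A symmetric set is *spiny* if `𝓔_T` is injective for every `n ≥ 1` and
every spine `T` of `[n]` (a tree with vertex set `[n]`). -/
def Spiny (X : SymSet) : Prop :=
  ∀ n : ℕ, 1 ≤ n → ∀ T : SimpleGraph (Fin (n + 1)), T.IsTree →
    Function.Injective (X.spineMap T)

/-- An element `x ∈ X_n` is degenerate if `x = y · σ` for some noninvertible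
surjection `σ : [n] → [k]`. -/
def Degenerate (X : SymSet) {n : ℕ} (x : X.obj n) : Prop :=
  ∃ (k : ℕ) (σ : Fin (n + 1) → Fin (k + 1)) (y : X.obj k),
    Function.Surjective σ ∧ ¬ Function.Bijective σ ∧ x = X.act σ y

/-- A symmetric subset (subfunctor) of `X`. -/
structure SymSubset (X : SymSet) where
  carrier : ∀ n : ℕ, Set (X.obj n)
  act_mem : ∀ {m n : ℕ} (α : Fin (m + 1) → Fin (n + 1)) {x : X.obj n},
    x ∈ carrier n → X.act α x ∈ carrier m

/-- `X` is `n`-skeletal: the smallest symmetric subset of `X` containing all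
of its `n`-simplices is all of `X`. -/
def IsSkeletal (X : SymSet) (n : ℕ) : Prop :=
  ∀ Y : SymSubset X, (∀ x : X.obj n, x ∈ Y.carrier n) →
    ∀ (m : ℕ) (x : X.obj m), x ∈ Y.carrier m

/-- `X` has dimension `n`: it is `n`-skeletal but not `k`-skeletal for `k < n`
(for `n ≥ 1` this is equivalent to not being `(n-1)`-skeletal). -/
def HasDim (X : SymSet) (n : ℕ) : Prop :=
  X.IsSkeletal n ∧ ∀ k : ℕ, k < n → ¬ X.IsSkeletal k

/-- Two objects are related if there is an edge between them (in either direction). -/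
def EdgeRel (X : SymSet) (a b : X.obj 0) : Prop :=
  ∃ f : X.obj 1, (X.edgeDom f = a ∧ X.edgeCod f = b) ∨ (X.edgeDom f = b ∧ X.edgeCod f = a)

/-- `X` is connected: it is nonempty and any two objects are joined by a
zig-zag of edges. -/
def Connected (X : SymSet) : Prop :=
  Nonempty (X.obj 0) ∧ ∀ a b : X.obj 0, Relation.ReflTransGen X.EdgeRel a b

/-- `n_a`: the number of nonidentity edges with domain `a`. -/
noncomputable def nEdges (X : SymSet) (a : X.obj 0) : ℕ :=
  Nat.card { f : X.obj 1 // X.edgeDom f = a ∧ ¬ X.IsIdentityEdge f }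

/-- `p(X)`: the maximum of the `n_a` over all objects `a`. -/
noncomputable def pVal (X : SymSet) : ℕ := ⨆ a : X.obj 0, X.nEdges a

/-- A map of symmetric sets (a natural transformation). -/
structure SymMap (X Y : SymSet) where
  app : ∀ n : ℕ, X.obj n → Y.obj n
  naturality : ∀ {m n : ℕ} (α : Fin (m + 1) → Fin (n + 1)) (x : X.obj n),
    app m (X.act α x) = Y.act α (app n x)

/-- A map of symmetric sets is an isomorphism iff it is levelwise bijective. -/
def SymMap.IsIso {X Y : SymSet} (F : SymMap X Y) : Prop :=
  ∀ n : ℕ, Function.Bijective (F.app n)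

/-- `X` and `Y` are isomorphic symmetric sets. -/
def Isomorphic (X Y : SymSet) : Prop := ∃ F : SymMap X Y, F.IsIso

/-- The Bousfield–Segal map `𝓑_m : X_m → X_1^m`, `x ↦ (x_{01}, x_{02}, …, x_{0m})`. -/
def bousfield (X : SymSet) {m : ℕ} (x : X.obj m) : Fin m → X.obj 1 :=
  fun i => X.edge 0 i.succ x

/-- `X` is spiny in degrees below `q`: `𝓔_T` is injective for every spine `T`
of `[n]` for each `1 ≤ n ≤ q`. -/
def SpinyBelow (X : SymSet) (q : ℕ) : Prop :=
  ∀ n : ℕ, 1 ≤ n → n ≤ q → ∀ T : SimpleGraph (Fin (n + 1)), T.IsTree →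
    Function.Injective (X.spineMap T)

/-- `X` is a groupoid: `𝓔_T : X_n → lim_T X` is a bijection for every `n ≥ 1`
and every spine `T` of `[n]`. -/
def IsGroupoid (X : SymSet) : Prop :=
  ∀ n : ℕ, 1 ≤ n → ∀ T : SimpleGraph (Fin (n + 1)), T.IsTree →
    Function.Bijective (X.spineMap T)

/-- `X` is reduced: `X_0` is a singleton. -/
def Reduced (X : SymSet) : Prop := Nonempty (X.obj 0) ∧ Subsingleton (X.obj 0)

/-- A partial group is a reduced spiny symmetric set. -/
def IsPartialGroup (X : SymSet) : Prop := X.Reduced ∧ X.Spiny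

/-- The levelwise product of two symmetric sets. -/
def prod (X Y : SymSet) : SymSet where
  obj n := X.obj n × Y.obj n
  act α p := (X.act α p.1, Y.act α p.2)
  act_id p := by cases p with | mk a b => simp only [X.act_id, Y.act_id]
  act_comp α β p := by cases p with | mk a b => simp only [X.act_comp, Y.act_comp]

end SymSet

namespace SymSet

variable (X : SymSet)

/-- The collapse map sending `b` to `a` and fixing everything else. -/
def kap {N : ℕ} (b a : Fin (N + 1)) : Fin (N + 1) → Fin (N + 1) :=
  fun k => if k = b then a else k

lemma edge_act {m n : ℕ} (α : Fin (m + 1) → Fin (n + 1)) (a b : Fin (m + 1)) (x : X.obj n) :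
    X.edge a b (X.act α x) = X.edge (α a) (α b) x := by
  unfold edge
  rw [X.act_comp]
  congr 1
  funext t
  by_cases h : t = 0 <;> simp [h, Function.comp]

/-- The vertex `x_i` of a simplex. -/
def vtx {n : ℕ} (i : Fin (n + 1)) (x : X.obj n) : X.obj 0 :=
  X.act (fun _ : Fin 1 => i) x

lemma edge_diag {n : ℕ} (i : Fin (n + 1)) (x : X.obj n) :
    X.edge i i x = X.identityEdge (X.vtx i x) := by
  unfold edge identityEdge vtx
  rw [X.act_comp]
  congr 1
  funext t
  by_cases h : t = 0 <;> simp [h, Function.comp]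

lemma edgeDom_edge {n : ℕ} (i j : Fin (n + 1)) (x : X.obj n) :
    X.edgeDom (X.edge i j x) = X.vtx i x := by
  unfold edgeDom edge vtx
  rw [X.act_comp]
  congr 1

lemma edgeDom_identityEdge (a : X.obj 0) : X.edgeDom (X.identityEdge a) = a := by
  unfold edgeDom identityEdge
  rw [X.act_comp]
  have h : ((fun _ : Fin 2 => (0 : Fin 1)) ∘ fun _ : Fin 1 => (0 : Fin 2)) = id := by
    funext t; exact Subsingleton.elim _ _
  rw [h, X.act_id]

lemma edge_rev {n : ℕ} (i j : Fin (n + 1)) (x : X.obj n) :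
    X.edge j i x = X.act (fun t : Fin 2 => if t = 0 then 1 else 0) (X.edge i j x) := by
  unfold edge
  rw [X.act_comp]
  congr 1
  funext t
  by_cases h : t = 0 <;> simp [h, Function.comp]

lemma identityEdge_rev (a : X.obj 0) :
    X.act (fun t : Fin 2 => if t = 0 then 1 else 0) (X.identityEdge a) = X.identityEdge a := by
  unfold identityEdge
  rw [X.act_comp]
  rfl

lemma edge_rev_eq {n : ℕ} {i j : Fin (n + 1)} {x x' : X.obj n}
    (h : X.edge i j x = X.edge i j x') : X.edge j i x = X.edge j i x' := by
  rw [X.edge_rev i j x, X.edge_rev i j x', h]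

lemma edge_of_collapse {n : ℕ} {x : X.obj n} {i j : Fin (n + 1)}
    (h : X.act (kap j i) x = x) : X.edge i j x = X.identityEdge (X.vtx i x) := by
  conv_lhs => rw [← h]
  rw [X.edge_act]
  have h1 : kap j i i = i := by unfold kap; split <;> rfl
  have h2 : kap j i j = i := by unfold kap; simp
  rw [h1, h2, X.edge_diag]

lemma isIdentityEdge_edge {n : ℕ} {x : X.obj n} {i j : Fin (n + 1)}
    (h : X.IsIdentityEdge (X.edge i j x)) : X.edge i j x = X.identityEdge (X.vtx i x) := by
  obtain ⟨a, ha⟩ := h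
  have hav : a = X.vtx i x := by rw [← X.edgeDom_identityEdge a, ← ha, X.edgeDom_edge]
  rw [ha, hav]

lemma kap_swap {n : ℕ} {x : X.obj n} {a b : Fin (n + 1)}
    (h : X.act (kap b a) x = x) : X.act (kap a b) x = x := by
  conv_lhs => rw [← h]
  rw [X.act_comp]
  have hc : (kap b a ∘ kap a b) = kap b a := by
    funext k
    simp only [Function.comp_apply]
    unfold kap
    by_cases hk : k = a <;> by_cases hk2 : k = b <;> simp [hk, hk2]
  rw [hc, h]

/-- The star graph with center `c`. -/
def starG {N : ℕ} (c : Fin (N + 1)) : SimpleGraph (Fin (N + 1)) where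
  Adj a b := a ≠ b ∧ (a = c ∨ b = c)
  symm := by
    constructor
    intro a b h
    exact ⟨Ne.symm h.1, h.2.symm⟩
  loopless := by
    constructor
    intro a h
    exact h.1 rfl

lemma starG_isTree {N : ℕ} (c : Fin (N + 1)) : (starG c).IsTree := by
  constructor
  · rw [SimpleGraph.connected_iff]
    refine ⟨?_, ⟨c⟩⟩
    intro a b
    by_cases hab : a = b
    · exact hab ▸ SimpleGraph.Reachable.refl a
    · by_cases hac : a = c
      · have h : (starG c).Adj a b := ⟨hab, Or.inl hac⟩
        exact h.reachable
      · by_cases hbc : b = c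
        · have h : (starG c).Adj a b := ⟨hab, Or.inr hbc⟩
          exact h.reachable
        · have h1 : (starG c).Adj a c := ⟨hac, Or.inr rfl⟩
          have h2 : (starG c).Adj c b := ⟨Ne.symm hbc, Or.inl rfl⟩
          exact h1.reachable.trans h2.reachable
  · intro v p hp
    have hlen := hp.three_le_length
    have hnd := hp.support_nodup
    cases p with
    | nil => simp at hlen
    | cons h1 p1 =>
      rename_i u1
      cases p1 with
      | nil => simp at hlen
      | cons h2 p2 =>
        rename_i u2
        cases p2 with
        | nil => simp at hlen
        | cons h3 p3 =>
          rename_i u3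
          simp only [SimpleGraph.Walk.support_cons, List.tail_cons, List.nodup_cons,
            List.mem_cons] at hnd
          obtain ⟨h1ne, h1c⟩ := h1
          obtain ⟨h2ne, h2c⟩ := h2
          obtain ⟨h3ne, h3c⟩ := h3
          by_cases hu1 : u1 = c
          · have hu2 : u2 ≠ c := fun h => h2ne (hu1.trans h.symm)
            have hu3 : u3 = c := h3c.resolve_left hu2
            subst hu3
            subst hu1
            exact hnd.1 (Or.inr p3.start_mem_support)
          · have hv : v = c := h1c.resolve_right hu1
            have hu2 : u2 = c := h2c.resolve_left hu1
            subst hu2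
            subst hv
            exact hnd.2.1 p3.end_mem_support

lemma spine_edge_eq {n : ℕ} {T : SimpleGraph (Fin (n + 1))} {x x' : X.obj n}
    (h : X.spineMap T x = X.spineMap T x') {a b : Fin (n + 1)} (hadj : T.Adj a b) :
    X.edge a b x = X.edge a b x' := by
  rcases lt_trichotomy a b with hlt | heq | hgt
  · exact congrFun (congrFun (congrFun (congrFun (congrArg Subtype.val h) a) b) hlt) hadj
  · exact absurd heq hadj.ne
  · exact X.edge_rev_eq
      (congrFun (congrFun (congrFun (congrFun (congrArg Subtype.val h) b) a) hgt) hadj.symm)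

lemma spineMap_eq_of_edges {n : ℕ} {T : SimpleGraph (Fin (n + 1))} {x x' : X.obj n}
    (h : ∀ a b : Fin (n + 1), a < b → T.Adj a b → X.edge a b x = X.edge a b x') :
    X.spineMap T x = X.spineMap T x' := by
  apply Subtype.ext
  funext a b hlt hadj
  exact h a b hlt hadj

lemma adj01 {T : SimpleGraph (Fin 2)} (hT : T.IsTree) : T.Adj 0 1 := by
  obtain ⟨w⟩ := hT.isConnected.preconnected 0 1
  have hnil : ¬ w.Nil := SimpleGraph.Walk.not_nil_of_ne (by decide)
  have h : T.Adj 0 (w.getVert 1) := SimpleGraph.Walk.adj_snd hnil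
  have hv : w.getVert 1 = 1 := by
    have hne := h.ne
    have : ∀ z : Fin 2, (0 : Fin 2) ≠ z → z = 1 := by decide
    exact this _ hne
  rwa [hv] at h

lemma inj_level_one (T : SimpleGraph (Fin 2)) (hT : T.IsTree) :
    Function.Injective (X.spineMap (n := 1) T) := by
  intro x x' h
  have h01 := X.spine_edge_eq h (adj01 hT)
  have e1 : ∀ y : X.obj 1, X.edge 0 1 y = y := by
    intro y
    unfold edge
    have hid : (fun t : Fin 2 => if t = 0 then (0 : Fin 2) else 1) = id := by
      funext t; fin_cases t <;> rfl
    rw [hid, X.act_id]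
  rwa [e1, e1] at h01

noncomputable def rmap {N : ℕ} (b a : Fin (N + 2)) : Fin (N + 2) → Fin (N + 1) :=
  fun k => if k = b then Function.invFun b.succAbove a else Function.invFun b.succAbove k

lemma succAbove_rmap {N : ℕ} (b a : Fin (N + 2)) (hab : a ≠ b) (k : Fin (N + 2)) :
    b.succAbove (rmap b a k) = kap b a k := by
  have hli : Function.LeftInverse (Function.invFun b.succAbove) b.succAbove :=
    Function.leftInverse_invFun Fin.succAbove_right_injective
  unfold rmap kap
  by_cases hk : k = b
  · rw [if_pos hk, if_pos hk]
    obtain ⟨m, hm⟩ := Fin.exists_succAbove_eq hab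
    rw [← hm, hli m]
  · rw [if_neg hk, if_neg hk]
    obtain ⟨m, hm⟩ := Fin.exists_succAbove_eq hk
    rw [← hm, hli m]

lemma rmap_fiber {N : ℕ} (b a : Fin (N + 2)) (hab : a ≠ b) {c d : Fin (N + 2)} (hcd : c ≠ d)
    (h : rmap b a c = rmap b a d) : (c = b ∧ d = a) ∨ (c = a ∧ d = b) := by
  have h2 := congrArg b.succAbove h
  rw [succAbove_rmap b a hab, succAbove_rmap b a hab] at h2
  unfold kap at h2
  by_cases hc : c = b <;> by_cases hd : d = b
  · exact absurd (hc.trans hd.symm) hcd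
  · rw [if_pos hc, if_neg hd] at h2
    exact Or.inl ⟨hc, h2.symm⟩
  · rw [if_neg hc, if_pos hd] at h2
    exact Or.inr ⟨h2, hd⟩
  · rw [if_neg hc, if_neg hd] at h2
    exact absurd h2 hcd

lemma collapse_of_isIdentityEdge {n : ℕ}
    (hInj : ∀ T : SimpleGraph (Fin (n + 1)), T.IsTree → Function.Injective (X.spineMap (n := n) T))
    {x : X.obj n} {i j : Fin (n + 1)} (hij : i ≠ j)
    (hid : X.IsIdentityEdge (X.edge i j x)) : X.act (kap j i) x = x := by
  have hidv := X.isIdentityEdge_edge hid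
  apply hInj (starG i) (starG_isTree i)
  apply X.spineMap_eq_of_edges
  intro p r _ hadj
  obtain ⟨hpr, hc⟩ := hadj
  rw [X.edge_act]
  have k1 : kap j i j = i := by unfold kap; simp
  have k2 : kap j i i = i := by unfold kap; split <;> rfl
  by_cases hpj : p = j
  · have hri : r = i := hc.resolve_left (by rw [hpj]; exact Ne.symm hij)
    rw [hpj, hri, k1, k2, X.edge_diag, X.edge_rev i j x, hidv, X.identityEdge_rev]
  · by_cases hrj : r = j
    · have hpi : p = i := hc.resolve_right (by rw [hrj]; exact Ne.symm hij)
      rw [hrj, hpi, k1, k2, X.edge_diag, hidv]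
    · have k3 : kap j i p = p := by unfold kap; simp [hpj]
      have k4 : kap j i r = r := by unfold kap; simp [hrj]
      rw [k3, k4]

lemma collapse_transfer {n : ℕ}
    (hInj : ∀ T : SimpleGraph (Fin (n + 1)), T.IsTree → Function.Injective (X.spineMap (n := n) T))
    {x : X.obj (n + 1)} {a b c d : Fin (n + 2)} (hab : a ≠ b) (hcd : c ≠ d)
    (hdeg : X.act (kap b a) x = x) (hid : X.IsIdentityEdge (X.edge c d x)) :
    X.act (kap d c) x = x := by
  by_cases hr : rmap b a c = rmap b a d
  · rcases rmap_fiber b a hab hcd hr with ⟨h1, h2⟩ | ⟨h1, h2⟩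
    · subst h1; subst h2; exact X.kap_swap hdeg
    · subst h1; subst h2; exact hdeg
  · have hcomp : (b.succAbove ∘ rmap b a) = kap b a := funext (succAbove_rmap b a hab)
    have hx : X.act (rmap b a) (X.act b.succAbove x) = x := by
      rw [X.act_comp, hcomp, hdeg]
    have hze : X.edge (rmap b a c) (rmap b a d) (X.act b.succAbove x) = X.edge c d x := by
      rw [X.edge_act]
      rw [succAbove_rmap b a hab, succAbove_rmap b a hab]
      conv_rhs => rw [← hdeg]
      rw [X.edge_act]
    have hzid : X.IsIdentityEdge (X.edge (rmap b a c) (rmap b a d) (X.act b.succAbove x)) := by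
      rw [hze]; exact hid
    have hz := X.collapse_of_isIdentityEdge hInj hr hzid
    set t := kap (rmap b a d) (rmap b a c) with ht
    have hx2 : X.act (t ∘ rmap b a) (X.act b.succAbove x) = x := by
      calc X.act (t ∘ rmap b a) (X.act b.succAbove x)
          = X.act (rmap b a) (X.act t (X.act b.succAbove x)) := (X.act_comp _ _ _).symm
        _ = X.act (rmap b a) (X.act b.succAbove x) := by rw [hz]
        _ = x := hx
    have t1 : t (rmap b a c) = rmap b a c := by
      rw [ht]; unfold kap; rw [if_neg hr]
    have t2 : t (rmap b a d) = rmap b a c := by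
      rw [ht]; unfold kap; rw [if_pos rfl]
    have hcomp2 : (t ∘ rmap b a) ∘ (kap d c) = t ∘ rmap b a := by
      funext k
      simp only [Function.comp_apply]
      unfold kap
      by_cases hk : k = d
      · rw [if_pos hk, hk, t1, t2]
      · rw [if_neg hk]
    calc X.act (kap d c) x
        = X.act (kap d c) (X.act (t ∘ rmap b a) (X.act b.succAbove x)) := by rw [hx2]
      _ = X.act ((t ∘ rmap b a) ∘ kap d c) (X.act b.succAbove x) := X.act_comp _ _ _
      _ = X.act (t ∘ rmap b a) (X.act b.succAbove x) := by rw [hcomp2]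
      _ = x := hx2

lemma contract_eq {n : ℕ}
    (hInj : ∀ T : SimpleGraph (Fin (n + 1)), T.IsTree → Function.Injective (X.spineMap (n := n) T))
    {x x' : X.obj (n + 1)} {a b : Fin (n + 2)} (hab : a ≠ b)
    (Dx : X.act (kap b a) x = x) (Dx' : X.act (kap b a) x' = x')
    (hE : ∀ c d : Fin (n + 2), c ≠ d → c ≠ b → d ≠ b → X.edge c d x = X.edge c d x') :
    x = x' := by
  have hcomp : (b.succAbove ∘ rmap b a) = kap b a := funext (succAbove_rmap b a hab)
  have hz : X.act b.succAbove x = X.act b.succAbove x' := by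
    apply hInj (starG 0) (starG_isTree 0)
    apply X.spineMap_eq_of_edges
    intro p r _ hadj
    rw [X.edge_act, X.edge_act]
    exact hE (b.succAbove p) (b.succAbove r)
      (fun h => hadj.1 (Fin.succAbove_right_injective h))
      (Fin.succAbove_ne b p) (Fin.succAbove_ne b r)
  calc x = X.act (rmap b a) (X.act b.succAbove x) := by rw [X.act_comp, hcomp, Dx]
    _ = X.act (rmap b a) (X.act b.succAbove x') := by rw [hz]
    _ = x' := by rw [X.act_comp, hcomp, Dx']

lemma edge_trans {n : ℕ}
    (hInj : Function.Injective (X.spineMap (n := 2) (starG 1)))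
    {x x' : X.obj n} {u v w : Fin (n + 1)} (huv : u ≠ v) (hvw : v ≠ w) (huw : u ≠ w)
    (h1 : X.edge u v x = X.edge u v x') (h2 : X.edge v w x = X.edge v w x') :
    X.edge u w x = X.edge u w x' := by
  set ψ : Fin 3 → Fin (n + 1) := fun t => if t = 0 then u else if t = 1 then v else w with hψ
  have hψ0 : ψ 0 = u := by simp [hψ]
  have hψ1 : ψ 1 = v := by simp [hψ]
  have hψ2 : ψ 2 = w := by simp [hψ]
  have key : X.act ψ x = X.act ψ x' := by
    apply hInj
    apply X.spineMap_eq_of_edges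
    intro p r hlt hadj
    rw [X.edge_act, X.edge_act]
    rcases hadj.2 with hp1 | hr1
    · have hr2 : r = 2 := by
        have hd : ∀ z : Fin 3, 1 < z → z = 2 := by decide
        exact hd r (hp1 ▸ hlt)
      rw [hp1, hr2, hψ1, hψ2]
      exact h2
    · have hp0 : p = 0 := by
        have hd : ∀ z : Fin 3, z < 1 → z = 0 := by decide
        exact hd p (hr1 ▸ hlt)
      rw [hp0, hr1, hψ0, hψ1]
      exact h1
  have hfin : X.edge (ψ 0) (ψ 2) x = X.edge (ψ 0) (ψ 2) x' := by
    rw [← X.edge_act, ← X.edge_act, key]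
  rwa [hψ0, hψ2] at hfin

lemma matched_all {n : ℕ}
    (hInj2 : Function.Injective (X.spineMap (n := 2) (starG 1)))
    {T : SimpleGraph (Fin (n + 1))} (hT : T.IsTree) {x x' : X.obj n}
    (hTE : ∀ p r : Fin (n + 1), T.Adj p r → X.edge p r x = X.edge p r x') :
    ∀ p r : Fin (n + 1), p ≠ r → X.edge p r x = X.edge p r x' := by
  have main : ∀ (p r : Fin (n + 1)) (w : T.Walk p r), p ≠ r →
      X.edge p r x = X.edge p r x' := by
    intro p r w
    induction w with
    | nil => intro h; exact absurd rfl h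
    | cons h w' ih =>
      rename_i u v r0
      intro hur
      by_cases hvr : v = r0
      · subst hvr; exact hTE _ _ h
      · exact X.edge_trans hInj2 h.ne hvr hur (hTE _ _ h) (ih hvr)
  intro p r hpr
  obtain ⟨w⟩ := hT.isConnected.preconnected p r
  exact main p r w hpr

lemma exists_collapse {q : ℕ} (hX : X.IsSkeletal q) {m : ℕ} (hm : q < m) (x : X.obj m) :
    ∃ i j : Fin (m + 1), i ≠ j ∧ X.act (kap j i) x = x := by
  have hY : ∀ (k : ℕ) (y : X.obj k),
      ∃ (α : Fin (k + 1) → Fin (q + 1)) (z : X.obj q), y = X.act α z := by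
    have h := hX ⟨fun k => {y | ∃ (α : Fin (k + 1) → Fin (q + 1)) (z : X.obj q), y = X.act α z},
      by
        intro m' n' β y hy
        obtain ⟨α, z, rfl⟩ := hy
        exact ⟨α ∘ β, z, X.act_comp β α z⟩⟩
      (fun y => ⟨id, y, (X.act_id y).symm⟩)
    exact fun k y => h k y
  obtain ⟨α, z, hxz⟩ := hY m x
  have hni : ¬ Function.Injective α := by
    intro hinj
    have hcard := Fintype.card_le_of_injective α hinj
    simp only [Fintype.card_fin] at hcard
    omega
  rw [Function.not_injective_iff] at hni
  obtain ⟨i, j, hαij, hij⟩ := hni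
  refine ⟨i, j, hij, ?_⟩
  rw [hxz, X.act_comp]
  congr 1
  funext k
  simp only [Function.comp_apply]
  unfold kap
  by_cases hk : k = j
  · rw [if_pos hk, hk, hαij]
  · rw [if_neg hk]

lemma exists_center {T : SimpleGraph (Fin 3)} (hT : T.IsTree) :
    ∃ c : Fin 3, ∀ z : Fin 3, z ≠ c → T.Adj c z := by
  have hreach : ∀ p r : Fin 3, p ≠ r → ∃ z, T.Adj p z := by
    intro p r h
    obtain ⟨w⟩ := hT.isConnected.preconnected p r
    have hnil : ¬ w.Nil := SimpleGraph.Walk.not_nil_of_ne h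
    exact ⟨_, SimpleGraph.Walk.adj_snd hnil⟩
  by_cases h01 : T.Adj 0 1 <;> by_cases h02 : T.Adj 0 2 <;> by_cases h12 : T.Adj 1 2
  · exact ⟨0, by intro z hz; fin_cases z <;>
      first | exact absurd rfl hz | exact h01 | exact h02⟩
  · exact ⟨0, by intro z hz; fin_cases z <;>
      first | exact absurd rfl hz | exact h01 | exact h02⟩
  · exact ⟨1, by intro z hz; fin_cases z <;>
      first | exact absurd rfl hz | exact h01.symm | exact h12⟩
  · obtain ⟨z, hz⟩ := hreach 2 0 (by decide)
    fin_cases z <;>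
      first | exact absurd hz.symm h02 | exact absurd hz.symm h12 | exact absurd hz T.irrefl
  · exact ⟨2, by intro z hz; fin_cases z <;>
      first | exact absurd rfl hz | exact h02.symm | exact h12.symm⟩
  · obtain ⟨z, hz⟩ := hreach 1 0 (by decide)
    fin_cases z <;>
      first | exact absurd hz.symm h01 | exact absurd hz T.irrefl | exact absurd hz h12
  · obtain ⟨z, hz⟩ := hreach 0 1 (by decide)
    fin_cases z <;>
      first | exact absurd hz T.irrefl | exact absurd hz h01 | exact absurd hz h02
  · obtain ⟨z, hz⟩ := hreach 0 1 (by decide)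
    fin_cases z <;>
      first | exact absurd hz T.irrefl | exact absurd hz h01 | exact absurd hz h02

lemma fin3_mem : ∀ (γ z1 z2 z3 : Fin 3), z1 ≠ γ → z2 ≠ γ → z3 ≠ γ → z1 ≠ z2 →
    (z3 = z1 ∨ z3 = z2) := by decide

lemma fin3_cover : ∀ (b γ c d : Fin 3), b ≠ γ → c ≠ b → d ≠ b → c ≠ d →
    (c = γ ∨ d = γ) := by decide

end SymSet

/-- a `q`-skeletal symmetric set is spiny iff `𝓔_T` is injective for
every spine `T` of `[n]` for each `1 ≤ n ≤ q`. -/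
theorem stmt4 (X : SymSet) (q : ℕ) (hX : X.IsSkeletal q) :
    X.Spiny ↔ X.SpinyBelow q := by
  constructor
  · intro h n h1 _ T hT
    exact h n h1 T hT
  intro hSB
  intro n
  induction n using Nat.strong_induction_on with
  | _ n IH =>
    match n, IH with
    | 0, _ => intro h1; exact absurd h1 (by decide)
    | 1, _ => intro _ T hT; exact X.inj_level_one T hT
    | (m + 2), IH =>
      intro _ T hT
      by_cases hq : m + 2 ≤ q
      · exact hSB (m + 2) (by omega) hq T hT
      · push_neg at hq
        intro x x' hxx
        have hTE : ∀ p r : Fin (m + 3), T.Adj p r → X.edge p r x = X.edge p r x' :=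
          fun p r hadj => X.spine_edge_eq hxx hadj
        obtain ⟨i, j, hij, Dx⟩ := X.exists_collapse hX (by omega) x
        obtain ⟨i', j', hij', Dx'⟩ := X.exists_collapse hX (by omega) x'
        have hInj1 : ∀ T1 : SimpleGraph (Fin (m + 2)), T1.IsTree →
            Function.Injective (X.spineMap (n := m + 1) T1) :=
          fun T1 hT1 => IH (m + 1) (by omega) (by omega) T1 hT1
        rcases Nat.eq_zero_or_pos m with rfl | hm
        · -- dimension 2 case
          obtain ⟨γ, hγ⟩ := SymSet.exists_center hT
          have hEγ : ∀ p r : Fin 3, p ≠ r → (p = γ ∨ r = γ) →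
              X.edge p r x = X.edge p r x' := by
            intro p r hpr hc
            rcases hc with h | h
            · subst h
              exact hTE _ _ (hγ r (Ne.symm hpr))
            · subst h
              exact hTE _ _ (hγ p hpr).symm
          have step1 : ∃ a b : Fin 3, a ≠ b ∧ X.act (SymSet.kap b a) x = x ∧
              X.act (SymSet.kap b a) x' = x' := by
            by_cases hc1 : i = γ ∨ j = γ
            · have hidx : X.IsIdentityEdge (X.edge i j x') := by
                rw [← hEγ i j hij hc1]
                exact ⟨_, X.edge_of_collapse Dx⟩
              exact ⟨i, j, hij, Dx, X.collapse_transfer hInj1 hij' hij Dx' hidx⟩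
            · by_cases hc2 : i' = γ ∨ j' = γ
              · have hidx : X.IsIdentityEdge (X.edge i' j' x) := by
                  rw [hEγ i' j' hij' hc2]
                  exact ⟨_, X.edge_of_collapse Dx'⟩
                exact ⟨i', j', hij', X.collapse_transfer hInj1 hij hij' Dx hidx, Dx'⟩
              · push_neg at hc1 hc2
                have hmem : i' = i ∨ i' = j := SymSet.fin3_mem γ i j i' hc1.1 hc1.2 hc2.1 hij
                have hjmem : j' = i ∨ j' = j := SymSet.fin3_mem γ i j j' hc1.1 hc1.2 hc2.2 hij
                rcases hmem with h | h
                · have hj' : j' = j := by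
                    rcases hjmem with h2 | h2
                    · exact absurd (h2.trans h.symm) (Ne.symm hij')
                    · exact h2
                  rw [h, hj'] at Dx'
                  exact ⟨i, j, hij, Dx, Dx'⟩
                · have hj' : j' = i := by
                    rcases hjmem with h2 | h2
                    · exact h2
                    · exact absurd (h2.trans h.symm) (Ne.symm hij')
                  rw [h, hj'] at Dx'
                  exact ⟨i, j, hij, Dx, X.kap_swap Dx'⟩
          obtain ⟨a, b, hab, DxC, Dx'C⟩ := step1
          by_cases hbγ : b = γ
          · have haγ : a ≠ γ := fun h => hab (h.trans hbγ.symm)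
            exact X.contract_eq hInj1 (Ne.symm hab) (X.kap_swap DxC) (X.kap_swap Dx'C)
              (fun c d hcd hcb hdb => hEγ c d hcd (SymSet.fin3_cover a γ c d haγ hcb hdb hcd))
          · exact X.contract_eq hInj1 hab DxC Dx'C
              (fun c d hcd hcb hdb => hEγ c d hcd (SymSet.fin3_cover b γ c d hbγ hcb hdb hcd))
        · -- dimension at least 3 case
          have hInj2 : Function.Injective (X.spineMap (n := 2) (SymSet.starG 1)) :=
            IH 2 (by omega) (by omega) (SymSet.starG 1) (SymSet.starG_isTree 1)
          have hall := X.matched_all hInj2 hT hTE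
          have hidx : X.IsIdentityEdge (X.edge i' j' x) := by
            rw [hall i' j' hij']
            exact ⟨_, X.edge_of_collapse Dx'⟩
          have DxC : X.act (SymSet.kap j' i') x = x := X.collapse_transfer hInj1 hij hij' Dx hidx
          exact X.contract_eq hInj1 hij' DxC Dx' (fun c d hcd _ _ => hall c d hcd)
end

section
/- Every 1-skeletal symmetric simplicial set is spiny. -/
/-! ### Auxiliary machinery for `stmt5` -/

/-- The map `[1] → [1]` (i.e. `Fin 2 → Fin 2`) sending `0 ↦ a`, `1 ↦ b`. -/
def mm (a b : Fin 2) : Fin 2 → Fin 2 := fun t => if t = 0 then a else b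

lemma mm_self : ∀ (a z : Fin 2), mm a a z = a := by decide

lemma mm_const_absorb : ∀ (a : Fin 2) (g : Fin 2 → Fin 2), mm a a ∘ g = mm a a := by decide

lemma mm_invol : ∀ (a b : Fin 2), a ≠ b → mm a b ∘ mm a b = id := by decide

lemma mm_comp_swap : ∀ (a b : Fin 2), mm a b ∘ mm 1 0 = mm b a := by decide

lemma mm_swap_comp : ∀ (a b : Fin 2), mm (mm 1 0 a) (mm 1 0 b) = mm 1 0 ∘ mm a b := by decide

lemma eq_swap_of_ne : ∀ (a b : Fin 2), a ≠ b → b = mm 1 0 a := by decide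

lemma swap_eq_of_ne : ∀ (a b : Fin 2), a ≠ b → mm 1 0 b = a := by decide

lemma eq_of_ne_swap : ∀ (a b : Fin 2), b ≠ mm 1 0 a → b = a := by decide

lemma mm_ne_swap : ∀ a : Fin 2, a ≠ mm 1 0 a := by decide

lemma mm_const_comp {k : ℕ} (a : Fin 2) (α : Fin (k + 1) → Fin 2) :
    mm a a ∘ α = fun _ => a :=
  funext fun i => mm_self a (α i)

/-- In a connected graph, a nonconstant function must change values across some edge. -/
lemma crossing {n : ℕ} {T : SimpleGraph (Fin (n + 1))} (hc : T.Connected)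
    {β : Sort*} (f : Fin (n + 1) → β) {p q : Fin (n + 1)} (hf : f p ≠ f q) :
    ∃ i j, T.Adj i j ∧ f i ≠ f j := by
  by_contra hcon
  push_neg at hcon
  have key : ∀ a b : Fin (n + 1), T.Reachable a b → f a = f b := by
    intro a b hab
    obtain ⟨w⟩ := hab
    induction w with
    | nil => rfl
    | cons h _ ih => exact (hcon _ _ h).trans ih
  exact hf (key p q (hc.preconnected p q))

lemma exists_adj {n : ℕ} (hn : 1 ≤ n) {T : SimpleGraph (Fin (n + 1))} (hc : T.Connected) :
    ∃ i j, T.Adj i j := by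
  obtain ⟨i, j, h, -⟩ := crossing hc (id : Fin (n + 1) → Fin (n + 1))
    (p := (0 : Fin (n + 1))) (q := ⟨1, by omega⟩) (Fin.ne_of_val_ne (by simp))
  exact ⟨i, j, h⟩

namespace SymSet

/-- In a 1-skeletal symmetric set, every simplex is the action of a map `[m] → [1]`
on a 1-simplex. -/
lemma exists_rep (X : SymSet) (hX : X.IsSkeletal 1) {m : ℕ} (x : X.obj m) :
    ∃ (α : Fin (m + 1) → Fin 2) (y : X.obj 1), x = X.act α y := by
  let Y : SymSubset X :=
    { carrier := fun k => {x | ∃ (α : Fin (k + 1) → Fin 2) (y : X.obj 1), x = X.act α y}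
      act_mem := by
        intro m n β x hx
        obtain ⟨γ, y, rfl⟩ := hx
        exact ⟨γ ∘ β, y, X.act_comp β γ y⟩ }
  exact hX Y (fun y => ⟨id, y, (X.act_id y).symm⟩) m x

lemma edge_act_s5 (X : SymSet) {n : ℕ} (α : Fin (n + 1) → Fin 2) (y : X.obj 1)
    (i j : Fin (n + 1)) :
    X.edge i j (X.act α y) = X.act (mm (α i) (α j)) y := by
  show X.act (fun t : Fin 2 => if t = 0 then i else j) (X.act α y) = _
  rw [X.act_comp]
  congr 1
  funext t
  by_cases h : t = 0 <;> simp [mm, h]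

/-- The core argument when `α` is constant. -/
lemma core_const (X : SymSet) {n : ℕ} (hn : 1 ≤ n) {T : SimpleGraph (Fin (n + 1))}
    (hT : T.IsTree) (α α' : Fin (n + 1) → Fin 2) (y y' : X.obj 1)
    (hE : ∀ i j, T.Adj i j → X.act (mm (α i) (α j)) y = X.act (mm (α' i) (α' j)) y')
    (a : Fin 2) (hc : ∀ i, α i = a) :
    X.act α y = X.act α' y' := by
  have hα : α = fun _ => a := funext hc
  by_cases hc' : ∀ i, α' i = α' 0
  · -- both constant
    obtain ⟨i, j, hadj⟩ := exists_adj hn hT.isConnected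
    have hα' : α' = fun _ => α' 0 := funext hc'
    have hR : X.act (mm a a) y = X.act (mm (α' 0) (α' 0)) y' := by
      have h0 := hE i j hadj
      rwa [hc i, hc j, hc' i, hc' j] at h0
    calc X.act α y = X.act (mm a a ∘ α') y := by rw [hα, mm_const_comp a α']
      _ = X.act α' (X.act (mm a a) y) := (X.act_comp α' (mm a a) y).symm
      _ = X.act α' (X.act (mm (α' 0) (α' 0)) y') := by rw [hR]
      _ = X.act (mm (α' 0) (α' 0) ∘ α') y' := X.act_comp α' (mm (α' 0) (α' 0)) y'
      _ = X.act α' y' := by rw [mm_const_comp (α' 0) α', ← hα']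
  · -- α' nonconstant
    push_neg at hc'
    obtain ⟨k, hk⟩ := hc'
    obtain ⟨p, q, hadj, hne⟩ := crossing hT.isConnected α' hk
    have hR : X.act (mm a a) y = X.act (mm (α' p) (α' q)) y' := by
      have h0 := hE p q hadj
      rwa [hc p, hc q] at h0
    have hy' : y' = X.act (mm a a) y := by
      have h2 := congrArg (X.act (mm (α' p) (α' q))) hR.symm
      rwa [X.act_comp, mm_invol _ _ hne, X.act_id, X.act_comp, mm_const_absorb] at h2
    calc X.act α y = X.act (mm a a ∘ α') y := by rw [hα, mm_const_comp a α']
      _ = X.act α' (X.act (mm a a) y) := (X.act_comp α' (mm a a) y).symm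
      _ = X.act α' y' := by rw [← hy']

/-- The main injectivity argument on representatives. -/
lemma main_core (X : SymSet) {n : ℕ} (hn : 1 ≤ n) {T : SimpleGraph (Fin (n + 1))}
    (hT : T.IsTree) (α α' : Fin (n + 1) → Fin 2) (y y' : X.obj 1)
    (hE : ∀ i j, T.Adj i j → X.act (mm (α i) (α j)) y = X.act (mm (α' i) (α' j)) y') :
    X.act α y = X.act α' y' := by
  by_cases hc : ∀ i, α i = α 0
  · exact X.core_const hn hT α α' y y' hE (α 0) hc
  by_cases hc' : ∀ i, α' i = α' 0
  · exact (X.core_const hn hT α' α y' y (fun i j h => (hE i j h).symm) (α' 0) hc').symm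
  -- both nonconstant
  push_neg at hc hc'
  obtain ⟨kp, hkp⟩ := hc
  obtain ⟨kq, hkq⟩ := hc'
  obtain ⟨p, q, hpq, hne⟩ := crossing hT.isConnected α hkp
  obtain ⟨p', q', hpq', hne'⟩ := crossing hT.isConnected α' hkq
  by_cases hε : ∀ i, α i = α' i
  · have hαα : α = α' := funext hε
    subst hαα
    have h0 := hE p q hpq
    have hyy : y = y' := by
      have h1 := congrArg (X.act (mm (α p) (α q))) h0
      rwa [X.act_comp, mm_invol _ _ hne, X.act_id,
        X.act_comp, mm_invol _ _ hne, X.act_id] at h1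
    rw [hyy]
  by_cases hε' : ∀ i, α' i = mm 1 0 (α i)
  · -- α' = swap ∘ α
    have hα' : α' = mm 1 0 ∘ α := funext hε'
    have h0 := hE p q hpq
    rw [hε' p, hε' q, mm_swap_comp, ← X.act_comp (mm (α p) (α q)) (mm 1 0) y'] at h0
    have hy : y = X.act (mm 1 0) y' := by
      have h1 := congrArg (X.act (mm (α p) (α q))) h0
      rwa [X.act_comp, mm_invol _ _ hne, X.act_id,
        X.act_comp, mm_invol _ _ hne, X.act_id] at h1
    rw [hy, X.act_comp, ← hα']
  -- mixed case
  push_neg at hε hε'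
  obtain ⟨j0, hj0⟩ := hε
  obtain ⟨i0, hi0⟩ := hε'
  have hi0' : α' i0 = α i0 := eq_of_ne_swap _ _ hi0
  have hcross : ∃ i j, T.Adj i j ∧ α i = α' i ∧ α j ≠ α' j := by
    have hf : (fun t => if α t = α' t then (0 : Fin 2) else 1) i0 ≠
        (fun t => if α t = α' t then (0 : Fin 2) else 1) j0 := by
      show (if α i0 = α' i0 then (0 : Fin 2) else 1) ≠ (if α j0 = α' j0 then (0 : Fin 2) else 1)
      rw [if_pos hi0'.symm, if_neg hj0]
      decide
    obtain ⟨i, j, hadj, hneq⟩ :=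
      crossing hT.isConnected (fun t => if α t = α' t then (0 : Fin 2) else 1) hf
    by_cases hi : α i = α' i
    · refine ⟨i, j, hadj, hi, ?_⟩
      intro hj; apply hneq; simp [hi, hj]
    · have hj : α j = α' j := by
        by_contra hj; apply hneq; simp [hi, hj]
      exact ⟨j, i, hadj.symm, hj, hi⟩
  obtain ⟨i, j, hadj, hij1, hij2⟩ := hcross
  have hj' : α' j = mm 1 0 (α j) := eq_swap_of_ne _ _ hij2
  have h0 := hE i j hadj
  rw [← hij1, hj'] at h0
  by_cases hab : α j = α i
  · rw [hab] at h0
    -- h0 : act (mm a a) y = act (mm a (s a)) y'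
    have hμ' := mm_invol (α i) (mm 1 0 (α i)) (mm_ne_swap (α i))
    have hy' : y' = X.act (mm (α i) (α i)) y := by
      have h1 := congrArg (X.act (mm (α i) (mm 1 0 (α i)))) h0.symm
      rwa [X.act_comp, hμ', X.act_id, X.act_comp, mm_const_absorb] at h1
    have h2 := hE p q hpq
    rw [hy', X.act_comp, mm_const_absorb] at h2
    -- h2 : act μ y = act (mm a a) y
    have hy : y = X.act (mm (α i) (α i)) y := by
      have h3 := congrArg (X.act (mm (α p) (α q))) h2
      rwa [X.act_comp, mm_invol _ _ hne, X.act_id, X.act_comp, mm_const_absorb] at h3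
    calc X.act α y = X.act α (X.act (mm (α i) (α i)) y) := by rw [← hy]
      _ = X.act (mm (α i) (α i) ∘ α) y := X.act_comp α (mm (α i) (α i)) y
      _ = X.act (mm (α i) (α i) ∘ α') y := by rw [mm_const_comp, mm_const_comp]
      _ = X.act α' (X.act (mm (α i) (α i)) y) := (X.act_comp α' (mm (α i) (α i)) y).symm
      _ = X.act α' y' := by rw [← hy']
  · have hsw : mm 1 0 (α j) = α i := swap_eq_of_ne (α i) (α j) (fun h => hab h.symm)
    rw [hsw] at h0
    -- h0 : act (mm a b) y = act (mm a a) y'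
    have hμ := mm_invol (α i) (α j) (fun h => hab h.symm)
    have hy : y = X.act (mm (α i) (α i)) y' := by
      have h1 := congrArg (X.act (mm (α i) (α j))) h0
      rwa [X.act_comp, hμ, X.act_id, X.act_comp, mm_const_absorb] at h1
    have h2 := hE p' q' hpq'
    rw [hy, X.act_comp, mm_const_absorb] at h2
    -- h2 : act (mm a a) y' = act μ'' y'
    have hy'2 : y' = X.act (mm (α i) (α i)) y' := by
      have h3 := congrArg (X.act (mm (α' p') (α' q'))) h2.symm
      rwa [X.act_comp, mm_invol _ _ hne', X.act_id, X.act_comp, mm_const_absorb] at h3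
    calc X.act α y = X.act α (X.act (mm (α i) (α i)) y') := by rw [← hy]
      _ = X.act (mm (α i) (α i) ∘ α) y' := X.act_comp α (mm (α i) (α i)) y'
      _ = X.act (mm (α i) (α i) ∘ α') y' := by rw [mm_const_comp, mm_const_comp]
      _ = X.act α' (X.act (mm (α i) (α i)) y') := (X.act_comp α' (mm (α i) (α i)) y').symm
      _ = X.act α' y' := by rw [← hy'2]

end SymSet

/-- every 1-skeletal symmetric simplicial set is spiny. -/
theorem stmt5 (X : SymSet) (hX : X.IsSkeletal 1) : X.Spiny := by
  intro n hn T hT x x' h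
  obtain ⟨α, y, rfl⟩ := X.exists_rep hX x
  obtain ⟨α', y', rfl⟩ := X.exists_rep hX x'
  have ht : ∀ i j, i < j → T.Adj i j →
      X.act (mm (α i) (α j)) y = X.act (mm (α' i) (α' j)) y' := by
    intro i j hlt hadj
    have hv := congrArg Subtype.val h
    have h1 : X.edge i j (X.act α y) = X.edge i j (X.act α' y') :=
      congrFun (congrFun (congrFun (congrFun hv i) j) hlt) hadj
    rwa [X.edge_act_s5, X.edge_act_s5] at h1
  have hE : ∀ i j, T.Adj i j →
      X.act (mm (α i) (α j)) y = X.act (mm (α' i) (α' j)) y' := by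
    intro i j hadj
    rcases lt_or_gt_of_ne hadj.ne with hlt | hgt
    · exact ht i j hlt hadj
    · have h2 := congrArg (X.act (mm 1 0)) (ht j i hgt hadj.symm)
      rwa [X.act_comp, mm_comp_swap, X.act_comp, mm_comp_swap] at h2
  exact X.main_core hn hT α α' y y' hE
end
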